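/- arXiv:1909.08944 — 3 statements merged into one kernel-verified Lean document; each statement's English description precedes it below -/
import Mathlib

section
/- (Descent lemma, composite form.) Let F = f + g where f : ℝⁿ → ℝ is convex and differentiable with L-Lipschitz gradient and g is proper convex lsc. Let T_γ(x) = prox_{γg}(x − γ∇f(x)). Then for any γ > 0 and all x, y ∈ ℝⁿ: F(T_γ(x)) + ((1−γL)/(2γ))‖T_γ(x)−x‖² + (1/(2γ))‖T_γ(x)−y‖² ≤ F(y) + (1/(2γ))‖x−y‖². -/
noncomputable section

open AffineMap InnerProductSpace Set
open scoped RealInnerProductSpace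

/-- Derivative of `f` along the line from `x` to `y`. -/
lemma line_hasDerivAt {n : ℕ} (f : EuclideanSpace ℝ (Fin n) → ℝ)
    (f' : EuclideanSpace ℝ (Fin n) → EuclideanSpace ℝ (Fin n))
    (hf' : ∀ z, HasGradientAt f (f' z) z)
    (x y : EuclideanSpace ℝ (Fin n)) (t : ℝ) :
    HasDerivAt (fun s => f (lineMap x y s)) ⟪f' (lineMap x y t), y - x⟫_ℝ t := by
  have h1 : HasFDerivAt f (toDual ℝ _ (f' (lineMap x y t))) (lineMap x y t) :=
    (hasGradientAt_iff_hasFDerivAt.1 (hf' _))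
  have h2 : HasDerivAt (fun s : ℝ => lineMap x y s : ℝ → EuclideanSpace ℝ (Fin n)) (y - x) t :=
    hasDerivAt_lineMap
  have := h1.comp_hasDerivAt t h2
  simpa [toDual_apply_apply, Function.comp_def] using this

/-- Gradient inequality for convex functions. -/
lemma grad_ineq {n : ℕ} (f : EuclideanSpace ℝ (Fin n) → ℝ)
    (f' : EuclideanSpace ℝ (Fin n) → EuclideanSpace ℝ (Fin n))
    (hf_cvx : ConvexOn ℝ Set.univ f) (hf' : ∀ z, HasGradientAt f (f' z) z)
    (x y : EuclideanSpace ℝ (Fin n)) :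
    f x + ⟪f' x, y - x⟫_ℝ ≤ f y := by
  have hφ : ConvexOn ℝ Set.univ (f ∘ (lineMap x y : ℝ →ᵃ[ℝ] EuclideanSpace ℝ (Fin n))) := by
    simpa using hf_cvx.comp_affineMap (lineMap x y)
  have hd := line_hasDerivAt f f' hf' x y 0
  have := hφ.le_slope_of_hasDerivAt (mem_univ (0:ℝ)) (mem_univ (1:ℝ)) one_pos (by
    simpa [Function.comp_def] using hd)
  rw [slope_def_field] at this
  simp only [lineMap_apply_zero, lineMap_apply_one, Function.comp] at this
  simp only [lineMap_apply_zero] at hd ⊢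
  -- this : ⟪f' x, y - x⟫_ℝ ≤ (f y - f x) / (1 - 0)
  have h1 : ⟪f' x, y - x⟫_ℝ ≤ f y - f x := by
    simpa using this
  linarith

/-- Descent lemma for L-smooth functions. -/
lemma smooth_descent {n : ℕ} (f : EuclideanSpace ℝ (Fin n) → ℝ)
    (f' : EuclideanSpace ℝ (Fin n) → EuclideanSpace ℝ (Fin n))
    (hf' : ∀ z, HasGradientAt f (f' z) z)
    (L : NNReal) (hL : LipschitzWith L f')
    (x y : EuclideanSpace ℝ (Fin n)) :
    f y ≤ f x + ⟪f' x, y - x⟫_ℝ + L / 2 * ‖y - x‖ ^ 2 := by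
  set ψ : ℝ → ℝ := fun t =>
    f (lineMap x y t) - t * ⟪f' x, y - x⟫_ℝ - (L / 2) * t ^ 2 * ‖y - x‖ ^ 2 with hψ
  have hderiv : ∀ t : ℝ, HasDerivAt ψ
      (⟪f' (lineMap x y t), y - x⟫_ℝ - ⟪f' x, y - x⟫_ℝ - L * t * ‖y - x‖ ^ 2) t := by
    intro t
    have h1 := line_hasDerivAt f f' hf' x y t
    have h2 : HasDerivAt (fun t : ℝ => t * ⟪f' x, y - x⟫_ℝ) ⟪f' x, y - x⟫_ℝ t := by
      simpa using (hasDerivAt_id t).mul_const ⟪f' x, y - x⟫_ℝ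
    have h3 : HasDerivAt (fun t : ℝ => (L / 2) * t ^ 2 * ‖y - x‖ ^ 2)
        (L * t * ‖y - x‖ ^ 2) t := by
      have := ((hasDerivAt_pow 2 t).const_mul ((L : ℝ) / 2)).mul_const (‖y - x‖ ^ 2)
      refine this.congr_deriv ?_
      push_cast
      ring
    exact (h1.sub h2).sub h3
  have hanti : AntitoneOn ψ (Icc 0 1) := by
    apply antitoneOn_of_deriv_nonpos (convex_Icc 0 1)
    · exact fun t _ => (hderiv t).differentiableAt.continuousAt.continuousWithinAt
    · intro t ht
      exact (hderiv t).differentiableAt.differentiableWithinAt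
    · intro t ht
      rw [interior_Icc] at ht
      rw [(hderiv t).deriv]
      have hcs : ⟪f' (lineMap x y t) - f' x, y - x⟫_ℝ ≤
          ‖f' (lineMap x y t) - f' x‖ * ‖y - x‖ := real_inner_le_norm _ _
      have hlip : ‖f' (lineMap x y t) - f' x‖ ≤ L * (t * ‖y - x‖) := by
        have := hL.dist_le_mul (lineMap x y t) x
        rw [dist_eq_norm] at this
        have he : lineMap x y t - x = t • (y - x) := by
          simp [lineMap_apply]
        calc ‖f' (lineMap x y t) - f' x‖ ≤ L * ‖lineMap x y t - x‖ := by
              simpa [dist_eq_norm] using this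
          _ = L * (t * ‖y - x‖) := by
              rw [he, norm_smul, Real.norm_eq_abs, abs_of_pos ht.1]
    -- fix below
      have hinner : ⟪f' (lineMap x y t) - f' x, y - x⟫_ℝ =
          ⟪f' (lineMap x y t), y - x⟫_ℝ - ⟪f' x, y - x⟫_ℝ := by
        rw [inner_sub_left]
      nlinarith [norm_nonneg (y - x), ht.1.le]
  have h01 := hanti (left_mem_Icc.2 one_pos.le) (right_mem_Icc.2 one_pos.le) one_pos.le
  simp only [hψ, lineMap_apply_zero, lineMap_apply_one] at h01
  nlinarith [h01]


/-- Strong-convexity inequality for the prox minimizer. -/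
lemma prox_ineq {n : ℕ} (g : EuclideanSpace ℝ (Fin n) → ℝ)
    (hg_cvx : ConvexOn ℝ Set.univ g)
    (γ : ℝ) (hγ : 0 < γ) (u p : EuclideanSpace ℝ (Fin n))
    (hp : IsMinOn (fun w => g w + ‖w - u‖ ^ 2 / (2 * γ)) Set.univ p)
    (y : EuclideanSpace ℝ (Fin n)) :
    2 * γ * g p + ‖p - u‖ ^ 2 + ‖y - p‖ ^ 2
      ≤ 2 * γ * g y + ‖y - u‖ ^ 2 := by
  have h2γ : (0:ℝ) < 2 * γ := by linarith
  have hγ' : (2:ℝ) * γ ≠ 0 := ne_of_gt h2γ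
  obtain ⟨A, hA⟩ : ∃ A : ℝ, ‖p - u‖ ^ 2 = A := ⟨_, rfl⟩
  obtain ⟨B, hB⟩ : ∃ B : ℝ, ‖y - u‖ ^ 2 = B := ⟨_, rfl⟩
  obtain ⟨C, hC⟩ : ∃ C : ℝ, ‖p - y‖ ^ 2 = C := ⟨_, rfl⟩
  have hCyp : ‖y - p‖ ^ 2 = C := by rw [norm_sub_rev, hC]
  rw [hA, hB, hCyp]
  have hI : C = A - 2 * ⟪p - u, y - u⟫_ℝ + B := by
    have hpy : p - y = (p - u) - (y - u) := by abel
    rw [← hC, hpy, norm_sub_sq_real, hA, hB]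
  have key : ∀ t : ℝ, 0 < t → t ≤ 1 →
      2 * γ * g p + A + (1 - t) * C ≤ 2 * γ * g y + B := by
    intro t ht0 ht1
    have hw := isMinOn_iff.mp hp ((1 - t) • p + t • y) (Set.mem_univ _)
    rw [hA] at hw
    have hgw : g ((1 - t) • p + t • y) ≤ (1 - t) * g p + t * g y :=
      hg_cvx.2 (Set.mem_univ p) (Set.mem_univ y) (by linarith) ht0.le (by ring)
    have hqw : ‖(1 - t) • p + t • y - u‖ ^ 2 = (1 - t) * A + t * B - t * (1 - t) * C := by
      have he : (1 - t) • p + t • y - u = (1 - t) • (p - u) + t • (y - u) := by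
        module
      rw [he, norm_add_sq_real, norm_smul, norm_smul, real_inner_smul_left,
        real_inner_smul_right, hI]
      simp only [Real.norm_eq_abs]
      rw [mul_pow, mul_pow, sq_abs, sq_abs, hA, hB]
      ring
    rw [hqw] at hw
    -- clear denominators in hw
    have hw2 : 2 * γ * g p + A ≤
        2 * γ * g ((1 - t) • p + t • y) + ((1 - t) * A + t * B - t * (1 - t) * C) := by
      rw [← div_le_div_iff_of_pos_right h2γ]
      have e1 : (2 * γ * g p + A) / (2 * γ) = g p + A / (2 * γ) := by
        field_simp <;> ring
      have e2 : (2 * γ * g ((1 - t) • p + t • y) + ((1 - t) * A + t * B - t * (1 - t) * C))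
          / (2 * γ)
          = g ((1 - t) • p + t • y) + ((1 - t) * A + t * B - t * (1 - t) * C) / (2 * γ) := by
        field_simp <;> ring
      rw [e1, e2]
      exact hw
    by_contra hcon
    push_neg at hcon
    have hmul := mul_lt_mul_of_pos_left hcon ht0
    nlinarith [hw2, hgw, hmul, mul_pos h2γ ht0]
  -- pass to the limit t → 0⁺
  have key0 : 2 * γ * g p + A + C ≤ 2 * γ * g y + B := by
    by_contra hcon
    push_neg at hcon
    have hδ0 : 0 < 2 * γ * g p + A + C - (2 * γ * g y + B) := by linarith
    set δ := 2 * γ * g p + A + C - (2 * γ * g y + B) with hδ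
    have hCnn : (0:ℝ) ≤ C := by rw [← hC]; positivity
    have hC1 : (0:ℝ) < C + 1 := by linarith
    set t := min 1 (δ / (C + 1)) with htdef
    have ht0 : 0 < t := lt_min one_pos (by positivity)
    have ht1 : t ≤ 1 := min_le_left _ _
    have hk := key t ht0 ht1
    have h1 : δ ≤ t * C := by rw [hδ]; nlinarith [hk]
    have h2 : t * C < δ := by
      have ht2 : t ≤ δ / (C + 1) := min_le_right _ _
      calc t * C ≤ (δ / (C + 1)) * C := mul_le_mul_of_nonneg_right ht2 hCnn
        _ < δ := by
            rw [div_mul_eq_mul_div, div_lt_iff₀ hC1]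
            nlinarith
    linarith
  exact key0

/-- Descent lemma (composite form) for the proximal gradient operator `T_γ`. -/
theorem descent_lemma {n : ℕ}
    (f : EuclideanSpace ℝ (Fin n) → ℝ) (f' : EuclideanSpace ℝ (Fin n) → EuclideanSpace ℝ (Fin n))
    (hf_cvx : ConvexOn ℝ Set.univ f)
    (hf' : ∀ z, HasGradientAt f (f' z) z)
    (L : NNReal) (hL : LipschitzWith L f')
    (g : EuclideanSpace ℝ (Fin n) → ℝ)
    (hg_cvx : ConvexOn ℝ Set.univ g) (hg_lsc : LowerSemicontinuous g)
    (γ : ℝ) (hγ : 0 < γ)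
    (T : EuclideanSpace ℝ (Fin n) → EuclideanSpace ℝ (Fin n))
    (hT : ∀ z, IsMinOn (fun w => g w + ‖w - (z - γ • f' z)‖ ^ 2 / (2 * γ)) Set.univ (T z))
    (F : EuclideanSpace ℝ (Fin n) → ℝ) (hF : ∀ z, F z = f z + g z) :
    ∀ x y, F (T x) + (1 - γ * L) / (2 * γ) * ‖T x - x‖ ^ 2
        + 1 / (2 * γ) * ‖T x - y‖ ^ 2
      ≤ F y + 1 / (2 * γ) * ‖x - y‖ ^ 2 := by
  intro x y
  have h2γ : (0:ℝ) < 2 * γ := by linarith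
  have hγ' : (2:ℝ) * γ ≠ 0 := ne_of_gt h2γ
  have hprox := prox_ineq g hg_cvx γ hγ (x - γ • f' x) (T x) (hT x) y
  have hdesc := smooth_descent f f' hf' L hL x (T x)
  have hgrad := grad_ineq f f' hf_cvx hf' x y
  have hA : ‖T x - (x - γ • f' x)‖ ^ 2
      = ‖T x - x‖ ^ 2 + 2 * (γ * ⟪f' x, T x - x⟫_ℝ) + γ ^ 2 * ‖f' x‖ ^ 2 := by
    have he : T x - (x - γ • f' x) = (T x - x) + γ • f' x := by module
    rw [he, norm_add_sq_real, real_inner_smul_right, real_inner_comm (T x - x) (f' x),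
      norm_smul, Real.norm_eq_abs, mul_pow, sq_abs]
  have hB : ‖y - (x - γ • f' x)‖ ^ 2
      = ‖x - y‖ ^ 2 + 2 * (γ * ⟪f' x, y - x⟫_ℝ) + γ ^ 2 * ‖f' x‖ ^ 2 := by
    have he : y - (x - γ • f' x) = (y - x) + γ • f' x := by module
    rw [he, norm_add_sq_real, real_inner_smul_right, real_inner_comm (y - x) (f' x),
      norm_smul, Real.norm_eq_abs, mul_pow, sq_abs, norm_sub_rev y x]
  have hyp : ‖y - T x‖ ^ 2 = ‖T x - y‖ ^ 2 := by rw [norm_sub_rev]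
  rw [hA, hB, hyp] at hprox
  rw [hF, hF]
  -- multiplied version of the goal
  have hgoal2 : 2 * γ * (f (T x) + g (T x)) + (1 - γ * L) * ‖T x - x‖ ^ 2 + ‖T x - y‖ ^ 2
      ≤ 2 * γ * (f y + g y) + ‖x - y‖ ^ 2 := by
    nlinarith [hprox, mul_le_mul_of_nonneg_left hdesc h2γ.le,
      mul_le_mul_of_nonneg_left hgrad h2γ.le]
  rw [← div_le_div_iff_of_pos_right h2γ] at hgoal2
  have e1 : (2 * γ * (f (T x) + g (T x)) + (1 - γ * L) * ‖T x - x‖ ^ 2 + ‖T x - y‖ ^ 2) / (2 * γ)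
      = f (T x) + g (T x) + (1 - γ * L) / (2 * γ) * ‖T x - x‖ ^ 2
        + 1 / (2 * γ) * ‖T x - y‖ ^ 2 := by
    field_simp
  have e2 : (2 * γ * (f y + g y) + ‖x - y‖ ^ 2) / (2 * γ)
      = f y + g y + 1 / (2 * γ) * ‖x - y‖ ^ 2 := by
    field_simp
  rw [e1, e2] at hgoal2
  exact hgoal2
end
end

section
/- (Descent lemma, inner-product form.) Under the same assumptions, for all x, y ∈ ℝⁿ: F(T_γ(x)) + ((2−γL)/(2γ))‖T_γ(x)−x‖² + (1/γ)⟨x−y, T_γ(x)−x⟩ ≤ F(y). -/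
open RealInnerProductSpace

noncomputable section

lemma line_hasDerivAt_s6 {n : ℕ} (a v : EuclideanSpace ℝ (Fin n)) (t : ℝ) :
    HasDerivAt (fun s : ℝ => a + s • v) v t := by
  simpa using ((hasDerivAt_id t).smul_const v).const_add a

lemma comp_line_hasDerivAt {n : ℕ} (f : EuclideanSpace ℝ (Fin n) → ℝ)
    (f' : EuclideanSpace ℝ (Fin n) → EuclideanSpace ℝ (Fin n))
    (hf' : ∀ z, HasGradientAt f (f' z) z)
    (a v : EuclideanSpace ℝ (Fin n)) (t : ℝ) :
    HasDerivAt (fun s : ℝ => f (a + s • v)) ⟪f' (a + t • v), v⟫ t := by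
  have h1 := (hf' (a + t • v)).hasFDerivAt.comp_hasDerivAt t (line_hasDerivAt_s6 a v t)
  exact h1

/-- Descent lemma for L-Lipschitz gradient. -/
lemma lipschitz_descent {n : ℕ} (f : EuclideanSpace ℝ (Fin n) → ℝ)
    (f' : EuclideanSpace ℝ (Fin n) → EuclideanSpace ℝ (Fin n))
    (hf' : ∀ z, HasGradientAt f (f' z) z) (L : NNReal) (hL : LipschitzWith L f')
    (a b : EuclideanSpace ℝ (Fin n)) :
    f b ≤ f a + ⟪f' a, b - a⟫ + (L : ℝ) / 2 * ‖b - a‖ ^ 2 := by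
  set v := b - a with hv
  set k : ℝ → ℝ := fun t => f (a + t • v) - t * ⟪f' a, v⟫ - (L : ℝ) / 2 * ‖v‖ ^ 2 * t ^ 2 with hkdef
  have hk : ∀ t : ℝ, HasDerivAt k
      (⟪f' (a + t • v), v⟫ - ⟪f' a, v⟫ - (L : ℝ) / 2 * ‖v‖ ^ 2 * (2 * t)) t := by
    intro t
    have h1 := ((comp_line_hasDerivAt f f' hf' a v t).sub
      ((hasDerivAt_id t).mul_const ⟪f' a, v⟫)).sub
      ((hasDerivAt_pow 2 t).const_mul ((L : ℝ) / 2 * ‖v‖ ^ 2))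
    refine h1.congr_deriv ?_
    ring
  have hdiff : Differentiable ℝ k := fun t => (hk t).differentiableAt
  have hmono : AntitoneOn k (Set.Icc 0 1) := by
    apply antitoneOn_of_deriv_nonpos (convex_Icc 0 1) hdiff.continuous.continuousOn
      (fun t _ => (hdiff t).differentiableWithinAt)
    intro t ht
    rw [interior_Icc] at ht
    rw [(hk t).deriv]
    have h2 : ⟪f' (a + t • v) - f' a, v⟫ ≤ ‖f' (a + t • v) - f' a‖ * ‖v‖ :=
      real_inner_le_norm _ _
    have h3 := hL.dist_le_mul (a + t • v) a
    rw [dist_eq_norm, dist_eq_norm] at h3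
    have h4 : ‖a + t • v - a‖ = t * ‖v‖ := by
      rw [add_sub_cancel_left, norm_smul, Real.norm_eq_abs, abs_of_pos ht.1]
    rw [h4] at h3
    have h5 : ⟪f' (a + t • v), v⟫ - ⟪f' a, v⟫ = ⟪f' (a + t • v) - f' a, v⟫ := by
      rw [inner_sub_left]
    rw [h5]
    nlinarith [norm_nonneg v, mul_le_mul_of_nonneg_right h3 (norm_nonneg v)]
  have hle := hmono (Set.left_mem_Icc.mpr zero_le_one) (Set.right_mem_Icc.mpr zero_le_one)
    zero_le_one
  have hk0 : k 0 = f a := by simp [hkdef]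
  have hk1 : k 1 = f b - ⟪f' a, v⟫ - (L : ℝ) / 2 * ‖v‖ ^ 2 := by
    simp [hkdef, hv]
  rw [hk0, hk1] at hle
  linarith

/-- Gradient inequality for convex functions. -/
lemma convex_grad_ineq {n : ℕ} (f : EuclideanSpace ℝ (Fin n) → ℝ)
    (f' : EuclideanSpace ℝ (Fin n) → EuclideanSpace ℝ (Fin n))
    (hf_cvx : ConvexOn ℝ Set.univ f) (hf' : ∀ z, HasGradientAt f (f' z) z)
    (a b : EuclideanSpace ℝ (Fin n)) :
    f a + ⟪f' a, b - a⟫ ≤ f b := by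
  set v := b - a with hv
  have hd : HasDerivAt (fun t : ℝ => f (a + t • v)) ⟪f' a, v⟫ 0 := by
    have := comp_line_hasDerivAt f f' hf' a v 0
    simpa using this
  have hslope := hasDerivAt_iff_tendsto_slope.mp hd
  have hmono : Filter.Tendsto (slope (fun t : ℝ => f (a + t • v)) 0) (nhdsWithin 0 (Set.Ioi 0))
      (nhds ⟪f' a, v⟫) :=
    hslope.mono_left (nhdsWithin_mono _ (fun t ht => ne_of_gt ht))
  have hbound : ∀ᶠ t in nhdsWithin (0:ℝ) (Set.Ioi 0),
      slope (fun t : ℝ => f (a + t • v)) 0 t ≤ f b - f a := by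
    filter_upwards [Ioo_mem_nhdsGT_of_mem (Set.mem_Ico.mpr ⟨le_refl (0:ℝ), zero_lt_one⟩)]
    intro t ht
    have hcvx := hf_cvx.2 (Set.mem_univ a) (Set.mem_univ b)
      (by linarith [ht.2] : (0:ℝ) ≤ 1 - t) ht.1.le (by ring)
    have heq : (1 - t) • a + t • b = a + t • v := by
      rw [hv]; module
    rw [heq] at hcvx
    rw [slope_def_field]
    have : (f (a + t • v) - f (a + (0:ℝ) • v)) / (t - 0) ≤ f b - f a := by
      rw [div_le_iff₀ (by linarith [ht.1] : (0:ℝ) < t - 0)]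
      simp only [zero_smul, add_zero, sub_zero]
      simp only [smul_eq_mul] at hcvx
      nlinarith [ht.1]
    simpa [div_sub_div_same, slope_def_field] using this
  have := le_of_tendsto hmono hbound
  linarith
/-- Descent lemma (inner-product form) for the proximal gradient operator `T_γ`. -/
theorem descent_lemma_inner {n : ℕ}
    (f : EuclideanSpace ℝ (Fin n) → ℝ) (f' : EuclideanSpace ℝ (Fin n) → EuclideanSpace ℝ (Fin n))
    (hf_cvx : ConvexOn ℝ Set.univ f)
    (hf' : ∀ z, HasGradientAt f (f' z) z)
    (L : NNReal) (hL : LipschitzWith L f')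
    (g : EuclideanSpace ℝ (Fin n) → ℝ)
    (hg_cvx : ConvexOn ℝ Set.univ g) (hg_lsc : LowerSemicontinuous g)
    (γ : ℝ) (hγ : 0 < γ)
    (T : EuclideanSpace ℝ (Fin n) → EuclideanSpace ℝ (Fin n))
    (hT : ∀ z, IsMinOn (fun w => g w + ‖w - (z - γ • f' z)‖ ^ 2 / (2 * γ)) Set.univ (T z))
    (F : EuclideanSpace ℝ (Fin n) → ℝ) (hF : ∀ z, F z = f z + g z) :
    ∀ x y, F (T x) + (2 - γ * L) / (2 * γ) * ‖T x - x‖ ^ 2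
        + 1 / γ * ⟪x - y, T x - x⟫ ≤ F y := by
  intro x y
  set p := T x with hp
  set u := x - γ • f' x with hu
  have hγne : γ ≠ 0 := ne_of_gt hγ
  -- prox optimality inequality
  have hprox : ∀ yy : EuclideanSpace ℝ (Fin n),
      g p + ⟪u - p, yy - p⟫ / γ ≤ g yy := by
    intro yy
    set a : EuclideanSpace ℝ (Fin n) := p - u with ha
    set b : EuclideanSpace ℝ (Fin n) := yy - p with hb
    have hkey : ∀ t : ℝ, 0 < t → t ≤ 1 →
        0 ≤ g yy - g p + ⟪a, b⟫ / γ + t * (‖b‖ ^ 2 / (2 * γ)) := by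
      intro t ht0 ht1
      have hmin := isMinOn_iff.mp (hT x) (p + t • b) (Set.mem_univ _)
      rw [← hp] at hmin
      have hwu : p + t • b - (x - γ • f' x) = a + t • b := by
        rw [ha, hu]; module
      rw [hwu] at hmin
      have hnorm : ‖a + t • b‖ ^ 2 = ‖a‖ ^ 2 + 2 * t * ⟪a, b⟫ + t ^ 2 * ‖b‖ ^ 2 := by
        rw [norm_add_sq_real, real_inner_smul_right, norm_smul, Real.norm_eq_abs,
          mul_pow, sq_abs]
        ring
      have hcvx := hg_cvx.2 (Set.mem_univ p) (Set.mem_univ yy)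
        (by linarith : (0:ℝ) ≤ 1 - t) ht0.le (by ring)
      have heq : (1 - t) • p + t • yy = p + t • b := by rw [hb]; module
      rw [heq] at hcvx
      simp only [smul_eq_mul] at hcvx
      have hmin' : g p + ‖p - u‖ ^ 2 / (2 * γ) ≤ g (p + t • b)
          + (‖a‖ ^ 2 + 2 * t * ⟪a, b⟫ + t ^ 2 * ‖b‖ ^ 2) / (2 * γ) := by
        rw [hnorm, ← hu] at hmin; exact hmin
      rw [show p - u = a from ha.symm] at hmin'
      have h2 : 0 ≤ t * (g yy - g p + ⟪a, b⟫ / γ + t * (‖b‖ ^ 2 / (2 * γ))) := by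
        have hexp : t * (g yy - g p + ⟪a, b⟫ / γ + t * (‖b‖ ^ 2 / (2 * γ)))
            = t * (g yy - g p) + (2 * t * ⟪a, b⟫ + t ^ 2 * ‖b‖ ^ 2) / (2 * γ) := by
          field_simp
          ring
        rw [hexp]
        have : (‖a‖ ^ 2 + 2 * t * ⟪a, b⟫ + t ^ 2 * ‖b‖ ^ 2) / (2 * γ)
            = ‖a‖ ^ 2 / (2 * γ) + (2 * t * ⟪a, b⟫ + t ^ 2 * ‖b‖ ^ 2) / (2 * γ) := by
          ring
        rw [this] at hmin'
        linarith
      have h3 := (mul_nonneg_iff_of_pos_left ht0).mp h2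
      linarith
    by_contra hcon
    push_neg at hcon
    set E : ℝ := g yy - g p + ⟪a, b⟫ / γ with hE
    have hEneg : E < 0 := by
      rw [hE]
      have : ⟪u - p, yy - p⟫ = -⟪a, b⟫ := by
        rw [ha, hb, ← inner_neg_left]; congr 1; module
      rw [this, neg_div] at hcon
      linarith
    set D : ℝ := ‖b‖ ^ 2 / (2 * γ) with hD
    have hDnn : 0 ≤ D := by positivity
    rcases eq_or_lt_of_le hDnn with hD0 | hDpos
    · have := hkey 1 one_pos le_rfl
      linarith
    · set t := min 1 (-E / (2 * D)) with hts
      have ht0 : 0 < t := lt_min one_pos (div_pos (by linarith) (by linarith))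
      have ht1 : t ≤ 1 := min_le_left _ _
      have hthis := hkey t ht0 ht1
      have htD : t * D ≤ -E / 2 := by
        calc t * D ≤ (-E / (2 * D)) * D := by
              apply mul_le_mul_of_nonneg_right (min_le_right _ _) hDnn
          _ = -E / 2 := by field_simp
      clear_value t
      clear_value E D
      linarith
  have h1 := lipschitz_descent f f' hf' L hL x p
  have h2 := convex_grad_ineq f f' hf_cvx hf' x y
  have h3 := hprox y
  have hid : ⟪u - p, y - p⟫ = ⟪x - y, p - x⟫ + ‖p - x‖ ^ 2
      - γ * ⟪f' x, y - x⟫ + γ * ⟪f' x, p - x⟫ := by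
    rw [hu, ← real_inner_self_eq_norm_sq]
    simp only [inner_sub_left, inner_sub_right, real_inner_smul_left]
    rw [real_inner_comm p x, real_inner_comm x y, real_inner_comm p y]
    ring
  rw [hid] at h3
  have hsplit : (⟪x - y, p - x⟫ + ‖p - x‖ ^ 2 - γ * ⟪f' x, y - x⟫ + γ * ⟪f' x, p - x⟫) / γ
      = ⟪x - y, p - x⟫ / γ + ‖p - x‖ ^ 2 / γ - ⟪f' x, y - x⟫ + ⟪f' x, p - x⟫ := by
    field_simp
  rw [hsplit] at h3
  rw [hF, hF]
  have hcoef : (2 - γ * (L : ℝ)) / (2 * γ) * ‖p - x‖ ^ 2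
      = ‖p - x‖ ^ 2 / γ - (L : ℝ) / 2 * ‖p - x‖ ^ 2 := by
    field_simp
  rw [hcoef]
  have hone : 1 / γ * ⟪x - y, p - x⟫ = ⟪x - y, p - x⟫ / γ := by ring
  rw [hone]
  linarith
end
end

section
/- Suppose F = f + g satisfies the global Hölderian error bound F(x) − F⋆ ≥ β · dist(x, argmin F)^p with β > 0, p ≥ 1, and that the iterates of the provisional algorithm with 0 < γ ≤ 1/L have the property that whenever b_k = 0 the point x_k satisfies ‖x_k − y_{k−1}‖² ≤ ζ and F(x_k) ≤ F(x₀). If the test returns b_k = 0 at most K times over all iterations, then F(x_{n+1}) − F⋆ ≤ (‖x₀ − x⋆‖² + K·R)/(2γ t_n²) for some constant R > 0 depending only on the problem; in particular if t_n ≥ Cn the rate is O(1/n²). -/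
noncomputable section

open RealInnerProductSpace Filter Set Topology

section Aux
variable {E : Type*} [NormedAddCommGroup E] [InnerProductSpace ℝ E] [CompleteSpace E]

private lemma aux_keyid (T : ℝ) (a c w q : E) :
    ‖T•w - ((T-1)•a + c)‖^2 - ‖T•q - ((T-1)•a + c)‖^2
      = T*(T-1)*(‖a-w‖^2 - ‖a-q‖^2) + T*(‖c-w‖^2 - ‖c-q‖^2) := by
  simp only [← real_inner_self_eq_norm_sq, inner_sub_left, inner_sub_right, inner_add_left,
    inner_add_right, real_inner_smul_left, real_inner_smul_right]
  rw [real_inner_comm a w, real_inner_comm a q, real_inner_comm c w, real_inner_comm c q,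
    real_inner_comm a c]
  ring

private lemma aux_path_deriv (f : E → ℝ) (f' : E → E) (hf' : ∀ z, HasGradientAt f (f' z) z)
    (y d : E) (s : ℝ) :
    HasDerivAt (fun s : ℝ => f (y + s • d)) ⟪f' (y + s • d), d⟫ s := by
  have hpath : HasDerivAt (fun s : ℝ => y + s • d) d s := by
    simpa using ((hasDerivAt_id s).smul_const d).const_add y
  have hgrad := (hf' (y + s • d)).hasFDerivAt
  have h := hgrad.comp_hasDerivAt s hpath
  simp at h
  exact h

private lemma aux_cvx_grad (f : E → ℝ) (f' : E → E) (hf' : ∀ z, HasGradientAt f (f' z) z)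
    (hcvx : ConvexOn ℝ Set.univ f) (y z : E) :
    f y + ⟪f' y, z - y⟫ ≤ f z := by
  set d := z - y with hd
  have hder : HasDerivAt (fun s : ℝ => f (y + s • d)) ⟪f' y, d⟫ 0 := by
    simpa using aux_path_deriv f f' hf' y d 0
  have hslope := hasDerivAt_iff_tendsto_slope.1 hder
  have hslope' : Tendsto (slope (fun s : ℝ => f (y + s • d)) 0) (𝓝[>] 0) (𝓝 ⟪f' y, d⟫) :=
    hslope.mono_left (nhdsWithin_mono _ (fun s hs => ne_of_gt hs))
  have hev : ∀ᶠ s in 𝓝[>] (0:ℝ), slope (fun s : ℝ => f (y + s • d)) 0 s ≤ f z - f y := by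
    filter_upwards [Ioc_mem_nhdsGT_of_mem (by constructor <;> norm_num : (0:ℝ) ∈ Ico 0 1)]
      with s hs
    have hs0 : 0 < s := hs.1
    have hcomb : f (y + s • d) ≤ (1 - s) * f y + s * f z := by
      have := hcvx.2 (mem_univ y) (mem_univ z) (by linarith [hs.2] : (0:ℝ) ≤ 1 - s)
        (le_of_lt hs0) (by ring)
      have hpt : (1 - s) • y + s • z = y + s • d := by rw [hd]; module
      rwa [hpt] at this
    simp only [slope_def_field, zero_smul, add_zero, sub_zero]
    rw [div_le_iff₀ hs0]
    nlinarith [hcomb]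
  have := le_of_tendsto hslope' hev
  rw [hd] at this; linarith

private lemma aux_descent (f : E → ℝ) (f' : E → E) (hf' : ∀ z, HasGradientAt f (f' z) z)
    (L : ℝ) (hL : ∀ a b : E, ‖f' a - f' b‖ ≤ L * ‖a - b‖) (y z : E) :
    f z ≤ f y + ⟪f' y, z - y⟫ + L / 2 * ‖z - y‖ ^ 2 := by
  set d := z - y with hd
  set ψ : ℝ → ℝ := fun s => f (y + s • d) - s * ⟪f' y, d⟫ - s ^ 2 * (L / 2) * ‖d‖ ^ 2 with hψ
  have hderiv : ∀ s : ℝ, HasDerivAt ψ (⟪f' (y + s • d), d⟫ - ⟪f' y, d⟫ - s * L * ‖d‖ ^ 2) s := by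
    intro s
    have h1 := aux_path_deriv f f' hf' y d s
    have h2 : HasDerivAt (fun s : ℝ => s * ⟪f' y, d⟫) ⟪f' y, d⟫ s := by
      simpa using (hasDerivAt_id s).mul_const ⟪f' y, d⟫
    have h3 : HasDerivAt (fun s : ℝ => s ^ 2 * (L / 2) * ‖d‖ ^ 2) (s * L * ‖d‖ ^ 2) s := by
      have := ((hasDerivAt_pow 2 s).mul_const (L / 2)).mul_const (‖d‖ ^ 2)
      exact this.congr_deriv (by rw [show (2:ℕ) - 1 = 1 from rfl, pow_one]; push_cast; ring)
    exact (h1.sub h2).sub h3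
  have hanti : AntitoneOn ψ (Icc 0 1) := by
    apply antitoneOn_of_deriv_nonpos (convex_Icc 0 1)
    · have hdiff : Differentiable ℝ ψ := fun s => (hderiv s).differentiableAt
      exact hdiff.continuous.continuousOn
    · intro s _
      exact (hderiv s).differentiableAt.differentiableWithinAt
    · intro s hs
      rw [interior_Icc] at hs
      rw [(hderiv s).deriv]
      have hlip := hL (y + s • d) y
      have hnn : ‖f' (y + s • d) - f' y‖ ≤ L * (s * ‖d‖) := by
        have h : y + s • d - y = s • d := by abel
        rw [h] at hlip
        rwa [norm_smul, Real.norm_eq_abs, abs_of_pos hs.1] at hlip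
      have hin : ⟪f' (y + s • d), d⟫ - ⟪f' y, d⟫ ≤ L * (s * ‖d‖) * ‖d‖ := by
        rw [← inner_sub_left]
        calc ⟪f' (y + s • d) - f' y, d⟫ ≤ ‖f' (y + s • d) - f' y‖ * ‖d‖ :=
              real_inner_le_norm _ _
        _ ≤ L * (s * ‖d‖) * ‖d‖ := mul_le_mul_of_nonneg_right hnn (norm_nonneg _)
      nlinarith [hin]
  have h01 := hanti (by constructor <;> norm_num : (0:ℝ) ∈ Icc 0 1)
    (by constructor <;> norm_num : (1:ℝ) ∈ Icc 0 1) (by norm_num)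
  have hz : y + (1:ℝ) • d = z := by rw [hd]; module
  simp only [hψ, hz, zero_smul, add_zero, one_pow, zero_pow, one_mul, zero_mul, sub_zero] at h01
  rw [hd] at *
  nlinarith [h01]

private lemma aux_prox_subgrad (g : E → ℝ) (hg : ConvexOn ℝ Set.univ g) (γ : ℝ) (hγ : 0 < γ)
    (u q : E) (hq : IsMinOn (fun w => g w + ‖w - u‖ ^ 2 / (2 * γ)) Set.univ q) (z : E) :
    ⟪u - q, z - q⟫ ≤ γ * (g z - g q) := by
  set I : ℝ := ⟪q - u, z - q⟫ with hI
  set N : ℝ := ‖z - q‖ ^ 2 with hN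
  have hNnn : 0 ≤ N := by positivity
  have key : ∀ s : ℝ, 0 < s → s ≤ 1 →
      ⟪u - q, z - q⟫ ≤ γ * (g z - g q) + s * N / 2 := by
    intro s hs0 hs1
    have hmin := hq (mem_univ (q + s • (z - q)))
    simp only [Set.mem_setOf_eq] at hmin
    have hnorm : ‖q + s • (z - q) - u‖ ^ 2
        = ‖q - u‖ ^ 2 + 2 * s * I + s ^ 2 * N := by
      have h : q + s • (z - q) - u = (q - u) + s • (z - q) := by abel
      rw [h, norm_add_sq_real, real_inner_smul_right, norm_smul, Real.norm_eq_abs,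
        abs_of_pos hs0, mul_pow, hI, hN]
      ring
    have hcvx : g (q + s • (z - q)) ≤ (1 - s) * g q + s * g z := by
      have := hg.2 (mem_univ q) (mem_univ z) (by linarith : (0:ℝ) ≤ 1 - s) hs0.le (by ring)
      have hpt : (1 - s) • q + s • z = q + s • (z - q) := by module
      rwa [hpt] at this
    rw [hnorm] at hmin
    have hsplit : (‖q - u‖ ^ 2 + 2 * s * I + s ^ 2 * N) / (2 * γ)
        = ‖q - u‖ ^ 2 / (2 * γ) + (2 * s * I + s ^ 2 * N) / (2 * γ) := by ring
    rw [hsplit] at hmin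
    have h1 : 0 ≤ s * ((g z - g q) + (2 * I + s * N) / (2 * γ)) := by
      have hexp : s * ((g z - g q) + (2 * I + s * N) / (2 * γ))
          = s * (g z - g q) + (2 * s * I + s ^ 2 * N) / (2 * γ) := by ring
      rw [hexp]; linarith
    have h3 : 0 ≤ (g z - g q) + (2 * I + s * N) / (2 * γ) :=
      nonneg_of_mul_nonneg_right h1 hs0
    have h4 : γ * ((g z - g q) + (2 * I + s * N) / (2 * γ))
        = γ * (g z - g q) + I + s * N / 2 := by
      field_simp; ring
    have h5 : 0 ≤ γ * (g z - g q) + I + s * N / 2 := by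
      rw [← h4]; exact mul_nonneg hγ.le h3
    have hflip : ⟪u - q, z - q⟫ = -I := by
      rw [hI, ← inner_neg_left]; congr 1; abel
    rw [hflip]; linarith
  have hseq : ∀ k : ℕ, ⟪u - q, z - q⟫ ≤ γ * (g z - g q) + (1 / (k + 1)) * N / 2 := by
    intro k
    apply key
    · positivity
    · rw [div_le_one (by positivity)]
      linarith [Nat.cast_nonneg (α := ℝ) k]
  have htend : Tendsto (fun k : ℕ => γ * (g z - g q) + (1 / ((k:ℝ) + 1)) * N / 2) atTop
      (𝓝 (γ * (g z - g q) + 0 * N / 2)) := by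
    apply Tendsto.const_add
    exact (tendsto_one_div_add_atTop_nhds_zero_nat.mul_const N).div_const 2
  rw [zero_mul, zero_div, add_zero] at htend
  exact ge_of_tendsto' htend hseq

private lemma aux_star (f : E → ℝ) (f' : E → E) (hf' : ∀ z, HasGradientAt f (f' z) z)
    (hf_cvx : ConvexOn ℝ Set.univ f)
    (L : ℝ) (hL : ∀ a b : E, ‖f' a - f' b‖ ≤ L * ‖a - b‖)
    (g : E → ℝ) (hg_cvx : ConvexOn ℝ Set.univ g)
    (γ : ℝ) (hγ : 0 < γ) (hγL : γ * L ≤ 1)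
    (q : E) (yk : E) (hq : IsMinOn (fun w => g w + ‖w - (yk - γ • f' yk)‖ ^ 2 / (2 * γ))
      Set.univ q)
    (F : E → ℝ) (hF : ∀ z, F z = f z + g z) (z : E) :
    2 * γ * (F q - F z) ≤ ‖z - yk‖ ^ 2 - ‖z - q‖ ^ 2 := by
  set P : ℝ := ⟪f' yk, q - yk⟫
  set Qz : ℝ := ⟪f' yk, z - yk⟫
  set Rz : ℝ := ⟪f' yk, z - q⟫
  set S : ℝ := ⟪yk - q, z - q⟫
  have h1 : f q ≤ f yk + P + L / 2 * ‖q - yk‖ ^ 2 := aux_descent f f' hf' L hL yk q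
  have h2 : f yk + Qz ≤ f z := aux_cvx_grad f f' hf' hf_cvx yk z
  have h3 : S - γ * Rz ≤ γ * (g z - g q) := by
    have := aux_prox_subgrad g hg_cvx γ hγ (yk - γ • f' yk) q hq z
    have hexp : ⟪yk - γ • f' yk - q, z - q⟫ = S - γ * Rz := by
      rw [show yk - γ • f' yk - q = (yk - q) - γ • f' yk by abel, inner_sub_left,
        real_inner_smul_left]
    rwa [hexp] at this
  have h4 : P - Qz + Rz = 0 := by
    have h : P - Qz + Rz = ⟪f' yk, (q - yk) - (z - yk) + (z - q)⟫ := by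
      rw [inner_add_right, inner_sub_right]
    rw [h, show (q - yk) - (z - yk) + (z - q) = 0 by abel, inner_zero_right]
  have h5 : ‖z - yk‖ ^ 2 = ‖z - q‖ ^ 2 - 2 * S + ‖q - yk‖ ^ 2 := by
    rw [show z - yk = (z - q) + (q - yk) by abel, norm_add_sq_real]
    have h : ⟪z - q, q - yk⟫ = -S := by
      rw [show (-S : ℝ) = ⟪q - yk, z - q⟫ by rw [← inner_neg_left]; congr 1; abel]
      exact real_inner_comm _ _
    rw [h]; ring
  have hnq : (0:ℝ) ≤ ‖q - yk‖ ^ 2 := by positivity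
  have h6 : γ * L * ‖q - yk‖ ^ 2 ≤ 1 * ‖q - yk‖ ^ 2 := mul_le_mul_of_nonneg_right hγL hnq
  have h2γ : (0:ℝ) ≤ 2 * γ := by linarith
  have h1' := mul_le_mul_of_nonneg_left h1 h2γ
  have h2' := mul_le_mul_of_nonneg_left h2 h2γ
  have h3' := mul_le_mul_of_nonneg_left h3 h2γ
  have h4' : 2 * γ * (P - Qz + Rz) = 0 := by rw [h4]; ring
  rw [hF q, hF z]
  nlinarith [h1', h2', h3', h4', h5, h6]

end Aux

set_option maxHeartbeats 1000000 in
/-- Accelerated rate for the provisional algorithm: under the Hölderian error bound, if the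
test returns `0` (no acceleration) at most `K` times, and non-accelerated steps only occur
at points of the bounded set `Z`, then `F(x_{n+1}) − F⋆ ≤ (‖x₀−x⋆‖² + K·R)/(2γ t_n²)`
for some constant `R > 0`. -/
theorem provisional_accelerated_rate {n : ℕ}
    (f : EuclideanSpace ℝ (Fin n) → ℝ) (f' : EuclideanSpace ℝ (Fin n) → EuclideanSpace ℝ (Fin n))
    (hf_cvx : ConvexOn ℝ Set.univ f)
    (hf' : ∀ z, HasGradientAt f (f' z) z)
    (L : NNReal) (hL : LipschitzWith L f')
    (g : EuclideanSpace ℝ (Fin n) → ℝ)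
    (hg_cvx : ConvexOn ℝ Set.univ g) (hg_lsc : LowerSemicontinuous g)
    (γ : ℝ) (hγ : 0 < γ) (hγL : γ ≤ 1 / L)
    (prox : EuclideanSpace ℝ (Fin n) → EuclideanSpace ℝ (Fin n))
    (hprox : ∀ u, IsMinOn (fun w => g w + ‖w - u‖ ^ 2 / (2 * γ)) Set.univ (prox u))
    (F : EuclideanSpace ℝ (Fin n) → ℝ) (hF : ∀ z, F z = f z + g z)
    (xstar : EuclideanSpace ℝ (Fin n)) (hxstar : IsMinOn F Set.univ xstar)
    -- global Hölderian error bound (Assumption EB)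
    (β p : ℝ) (hβ : 0 < β) (hp : 1 ≤ p)
    (hEB : ∀ z, β * Metric.infDist z {w | IsMinOn F Set.univ w} ^ p ≤ F z - F xstar)
    (t : ℕ → ℝ) (ht0 : t 0 = 1) (htpos : ∀ k, 1 ≤ t k)
    (htrec : ∀ k, t (k + 1) ^ 2 - t (k + 1) ≤ t k ^ 2)
    (b : ℕ → Bool)
    (x y : ℕ → EuclideanSpace ℝ (Fin n))
    (hy0 : y 0 = x 0)
    (hy : ∀ k ≥ 1, y k = if b k then
        x k + ((t (k - 1) - 1) / t k) • (x k - x (k - 1)) else x k)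
    (hx : ∀ k, x (k + 1) = prox (y k - γ • f' (y k)))
    -- non-accelerated steps only happen at points of the set Z
    (ζ : ℝ) (hζ : 0 < ζ)
    (hZ : ∀ k ≥ 1, b k = false → ‖x k - y (k - 1)‖ ^ 2 ≤ ζ ∧ F (x k) ≤ F (x 0))
    -- the test returns 0 at most K times
    (K : ℕ)
    (hK : ∀ N, ((Finset.Icc 1 N).filter fun k => b k = false).card ≤ K) :
    ∃ R : ℝ, 0 < R ∧ ∀ N : ℕ,
      F (x (N + 1)) - F xstar
        ≤ (‖x 0 - xstar‖ ^ 2 + (K : ℝ) * R) / (2 * γ * t N ^ 2) := by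
  classical
  have hL' : ∀ a b : EuclideanSpace ℝ (Fin n), ‖f' a - f' b‖ ≤ (L:ℝ) * ‖a - b‖ := by
    intro a b
    have := hL.dist_le_mul a b
    rwa [dist_eq_norm, dist_eq_norm] at this
  have hγL1 : γ * (L:ℝ) ≤ 1 := by
    rcases eq_or_lt_of_le L.coe_nonneg with h0 | h0
    · rw [← h0, mul_zero]; norm_num
    · exact (le_div_iff₀ h0).mp hγL
  have hstar : ∀ k (z : EuclideanSpace ℝ (Fin n)),
      2 * γ * (F (x (k+1)) - F z) ≤ ‖z - y k‖ ^ 2 - ‖z - x (k+1)‖ ^ 2 := by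
    intro k z
    rw [hx k]
    exact aux_star f f' hf' hf_cvx (L:ℝ) hL' g hg_cvx γ hγ hγL1 _ (y k) (hprox _) F hF z
  set S : Set (EuclideanSpace ℝ (Fin n)) := {w | IsMinOn F Set.univ w} with hS
  have hxS : xstar ∈ S := hxstar
  have hFmin : ∀ w, F xstar ≤ F w := fun w => hxstar (Set.mem_univ w)
  have hFz : ∀ z ∈ S, F z = F xstar := fun z hz =>
    le_antisymm (hz (Set.mem_univ xstar)) (hFmin z)
  have hvnn : ∀ w, 0 ≤ F w - F xstar := fun w => sub_nonneg.2 (hFmin w)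
  set Δ : ℝ := F (x 0) - F xstar with hΔ
  have hΔnn : 0 ≤ Δ := hvnn _
  set D : ℝ := max 1 (Δ / β) with hD
  have hD1 : (1:ℝ) ≤ D := le_max_left _ _
  have hRpos : (0:ℝ) < (D+1)^2 := by positivity
  have hRnn : (0:ℝ) ≤ (D+1)^2 := hRpos.le
  refine ⟨(D+1)^2, hRpos, ?_⟩
  have hdist : ∀ w, F w ≤ F (x 0) → Metric.infDist w S ≤ D := by
    intro w hw
    have h1 := hEB w
    have h2 : Metric.infDist w S ^ p ≤ Δ / β := by
      rw [le_div_iff₀' hβ]; linarith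
    have hd0 : 0 ≤ Metric.infDist w S := Metric.infDist_nonneg
    rcases le_or_gt (Metric.infDist w S) 1 with h | h
    · exact h.trans hD1
    · calc Metric.infDist w S = Metric.infDist w S ^ (1:ℝ) := (Real.rpow_one _).symm
        _ ≤ Metric.infDist w S ^ p := Real.rpow_le_rpow_of_exponent_le h.le hp
        _ ≤ Δ / β := h2
        _ ≤ D := le_max_right _ _
  have hnear : ∀ w, F w ≤ F (x 0) → ∃ z' ∈ S, ‖w - z'‖ ≤ D + 1 := by
    intro w hw
    have hlt : Metric.infDist w S < D + 1 := lt_of_le_of_lt (hdist w hw) (by linarith)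
    obtain ⟨z', hz'S, hz'⟩ := (Metric.infDist_lt_iff ⟨xstar, hxS⟩).1 hlt
    exact ⟨z', hz'S, by rw [← dist_eq_norm]; linarith⟩
  set c : ℕ → ℕ := fun N => ((Finset.Icc 1 N).filter fun k => b k = false).card with hc
  have key : ∀ N : ℕ, ∃ z ∈ S,
      2*γ*(t N)^2*(F (x (N+1)) - F xstar)
        + ‖t N • x (N+1) - ((t N - 1) • x N + z)‖^2
      ≤ ‖x 0 - xstar‖^2 + (c N : ℝ) * (D+1)^2 := by
    intro N
    induction N with
    | zero =>
      refine ⟨xstar, hxS, ?_⟩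
      have h := hstar 0 xstar
      rw [hy0] at h
      have hc0 : c 0 = 0 := by simp [hc]
      rw [hc0, ht0]
      rw [show (1:ℝ) • x 1 - (((1:ℝ) - 1) • x 0 + xstar) = x 1 - xstar from by module]
      rw [show ‖x 1 - xstar‖ = ‖xstar - x 1‖ from norm_sub_rev _ _,
        show ‖x 0 - xstar‖ = ‖xstar - x 0‖ from norm_sub_rev _ _]
      push_cast
      nlinarith [h]
    | succ N ih =>
      obtain ⟨z, hzS, hIH⟩ := ih
      have hT1 : 1 ≤ t (N+1) := htpos (N+1)
      have hTpos : 0 < t (N+1) := by linarith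
      have hTT : t (N+1) * (t (N+1) - 1) ≤ (t N)^2 := by nlinarith [htrec N]
      have hv1 := hvnn (x (N+1))
      have hv2 := hvnn (x (N+1+1))
      have hcomb : ∀ zc : EuclideanSpace ℝ (Fin n), zc ∈ S →
          2*γ*(t (N+1))^2*(F (x (N+1+1)) - F xstar)
            + ‖t (N+1) • x (N+1+1) - ((t (N+1) - 1) • x (N+1) + zc)‖^2
          ≤ 2*γ*(t (N+1)*(t (N+1)-1))*(F (x (N+1)) - F xstar)
            + ‖t (N+1) • y (N+1) - ((t (N+1) - 1) • x (N+1) + zc)‖^2 := by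
        intro zc hzc
        have hA := hstar (N+1) (x (N+1))
        have hB := hstar (N+1) zc
        rw [hFz zc hzc] at hB
        have hid := aux_keyid (t (N+1)) (x (N+1)) zc (y (N+1)) (x (N+1+1))
        have hA' := mul_le_mul_of_nonneg_left hA
          (mul_nonneg hTpos.le (by linarith : (0:ℝ) ≤ t (N+1) - 1))
        have hB' := mul_le_mul_of_nonneg_left hB hTpos.le
        linarith [hA', hB', hid]
      have h2γv : (0:ℝ) ≤ 2*γ*(F (x (N+1)) - F xstar) := by
        apply mul_nonneg (by linarith) hv1
      have h2 : 2*γ*(t (N+1)*(t (N+1)-1))*(F (x (N+1)) - F xstar)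
          ≤ 2*γ*(t N)^2*(F (x (N+1)) - F xstar) := by
        nlinarith [mul_le_mul_of_nonneg_right hTT h2γv]
      cases hb : b (N+1) with
      | true =>
        refine ⟨z, hzS, ?_⟩
        have hyv : y (N+1) = x (N+1) + ((t N - 1) / t (N+1)) • (x (N+1) - x N) := by
          rw [hy (N+1) (by omega), hb]; simp
        have hsc : t (N+1) * ((t N - 1) / t (N+1)) = t N - 1 := by field_simp
        have hU : t (N+1) • y (N+1) - ((t (N+1) - 1) • x (N+1) + z)
            = t N • x (N+1) - ((t N - 1) • x N + z) := by
          rw [hyv, smul_add, smul_smul, hsc]; module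
        have h1 := hcomb z hzS
        rw [hU] at h1
        have hcard : (c N : ℝ) ≤ (c (N+1) : ℝ) := by
          exact_mod_cast Finset.card_le_card (Finset.filter_subset_filter _
            (Finset.Icc_subset_Icc_right (by omega)))
        have := mul_le_mul_of_nonneg_right hcard hRnn
        linarith [h1, h2, hIH]
      | false =>
        have hF1 := (hZ (N+1) (by omega) hb).2
        obtain ⟨z', hz'S, hz'⟩ := hnear (x (N+1)) hF1
        refine ⟨z', hz'S, ?_⟩
        have hyv : y (N+1) = x (N+1) := by
          rw [hy (N+1) (by omega), hb]; simp
        have hU : t (N+1) • y (N+1) - ((t (N+1) - 1) • x (N+1) + z')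
            = x (N+1) - z' := by
          rw [hyv]; module
        have h1 := hcomb z' hz'S
        rw [hU] at h1
        have hz'2 : ‖x (N+1) - z'‖^2 ≤ (D+1)^2 :=
          pow_le_pow_left₀ (norm_nonneg _) hz' 2
        have hcard : (c N : ℝ) + 1 ≤ (c (N+1) : ℝ) := by
          have hnotmem : (N+1) ∉ (Finset.Icc 1 N).filter (fun k => b k = false) := by
            simp [Finset.mem_Icc]
          have hsub : insert (N+1) ((Finset.Icc 1 N).filter (fun k => b k = false))
              ⊆ (Finset.Icc 1 (N+1)).filter (fun k => b k = false) := by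
            apply Finset.insert_subset
            · simp [Finset.mem_Icc, hb]
            · exact Finset.filter_subset_filter _ (Finset.Icc_subset_Icc_right (by omega))
          have hcc := Finset.card_le_card hsub
          rw [Finset.card_insert_of_notMem hnotmem] at hcc
          exact_mod_cast hcc
        have husq : (0:ℝ) ≤ ‖t N • x (N+1) - ((t N - 1) • x N + z)‖^2 := by positivity
        have := mul_le_mul_of_nonneg_right hcard hRnn
        linarith [h1, h2, hIH, hz'2, husq]
  intro N
  obtain ⟨z, hzS, hkey⟩ := key N
  have htN : (1:ℝ) ≤ t N := htpos N
  have htN0 : (0:ℝ) < t N := by linarith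
  have hden : (0:ℝ) < 2 * γ * t N ^ 2 := by positivity
  rw [le_div_iff₀ hden]
  have husq : (0:ℝ) ≤ ‖t N • x (N+1) - ((t N - 1) • x N + z)‖^2 := by positivity
  have hcK : ((c N : ℕ) : ℝ) ≤ (K : ℝ) := by exact_mod_cast hK N
  have := mul_le_mul_of_nonneg_right hcK hRnn
  nlinarith [hkey, husq]
end
end
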